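/- Under the setup and Assumptions A4 and A5, assume μ({A = 0, R = 1}) > 0, and let m : ℝ^p × ℝ^q → ℝ be measurable such that m(L*, L) is a version of the conditional expectation E[Y | σ(L*, L)] under the complete-case conditional measure μ(·|{A = 0, R = 1}). Then m(L*, L) is also a version of E[Y | σ(L*, L)] under μ(·|{A = 0}). In other words, under MAR the complete-case outcome regression among untreated subjects coincides with the full-data outcome regression among untreated subjects. -/

import Mathlib

open MeasureTheory ProbabilityTheory
open scoped ENNReal ProbabilityTheory

set_option linter.unusedVariables false

/-- Under MAR, the complete-case outcome regression among untreated subjects coincides with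
the full-data outcome regression among untreated subjects. -/
theorem stmt_3
    {Ω : Type*} [𝓕 : MeasurableSpace Ω] [StandardBorelSpace Ω] [Nonempty Ω]
    (μ : Measure Ω) [IsProbabilityMeasure μ]
    {p q : ℕ}
    (Lstar : Ω → Fin p → ℝ) (L : Ω → Fin q → ℝ) (A R Y : Ω → ℝ)
    (hLstar : Measurable Lstar) (hL : Measurable L)
    (hA : Measurable A) (hR : Measurable R) (hY : Measurable Y)
    (hA01 : ∀ ω, A ω = 0 ∨ A ω = 1) (hR01 : ∀ ω, R ω = 0 ∨ R ω = 1)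
    (hY2 : MemLp Y 2 μ)
    (g : (Fin q → ℝ) → ℝ → ℝ) (hg : Measurable (Function.uncurry g))
    (hg01 : ∀ x a, g x a = 0 ∨ g x a = 1)
    -- Assumption A4 (MAR): R ⫫ (L, Y) | σ(L*, A)
    (hMAR : CondIndepFun (MeasurableSpace.comap (fun ω => (Lstar ω, A ω)) inferInstance)
      ((hLstar.prodMk hA).comap_le) R (fun ω => (L ω, Y ω)) μ)
    -- Assumption A5 (missingness positivity)
    (η : (Fin p → ℝ) → ℝ → ℝ) (hη : Measurable (Function.uncurry η))
    (hηver : (fun ω => η (Lstar ω) (A ω)) =ᵐ[μ]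
      μ[R|MeasurableSpace.comap (fun ω => (Lstar ω, A ω)) inferInstance])
    (ε₀ : ℝ) (hε₀ : 0 < ε₀)
    (hηpos : ∀ᵐ ω ∂μ, ε₀ ≤ η (Lstar ω) 0 ∧ ε₀ ≤ η (Lstar ω) 1)
    (hAR : 0 < μ {ω | A ω = 0 ∧ R ω = 1})
    (m : (Fin p → ℝ) → (Fin q → ℝ) → ℝ) (hm : Measurable (Function.uncurry m))
    (hmver : (fun ω => m (Lstar ω) (L ω)) =ᵐ[μ[|{ω | A ω = 0 ∧ R ω = 1}]]
      (μ[|{ω | A ω = 0 ∧ R ω = 1}])[Y|MeasurableSpace.comap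
          (fun ω => (Lstar ω, L ω)) inferInstance]) :
    (fun ω => m (Lstar ω) (L ω)) =ᵐ[μ[|{ω | A ω = 0}]]
      (μ[|{ω | A ω = 0}])[Y|MeasurableSpace.comap
          (fun ω => (Lstar ω, L ω)) inferInstance] := by

  classical
  have hG : MeasurableSpace.comap (fun ω => (Lstar ω, A ω)) inferInstance ≤ 𝓕 :=
    (hLstar.prodMk hA).comap_le
  have hG0 : MeasurableSpace.comap (fun ω => (Lstar ω, L ω)) inferInstance ≤ 𝓕 :=
    (hLstar.prodMk hL).comap_le
  set S₁ : Set Ω := {ω | A ω = 0 ∧ R ω = 1} with hS₁def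
  set S₀ : Set Ω := {ω | A ω = 0} with hS₀def
  have hS₁m : MeasurableSet S₁ := by
    have h : S₁ = A ⁻¹' {0} ∩ R ⁻¹' {1} := by ext ω; simp [hS₁def]
    rw [h]; exact (hA (measurableSet_singleton 0)).inter (hR (measurableSet_singleton 1))
  have hS₀m : MeasurableSet S₀ := by
    have h : S₀ = A ⁻¹' {0} := by ext ω; simp [hS₀def]
    rw [h]; exact hA (measurableSet_singleton 0)
  have hS₁0 : μ S₁ ≠ 0 := hAR.ne'
  have hS₀0 : μ S₀ ≠ 0 := by
    refine fun h => hS₁0 (le_antisymm (le_trans (measure_mono ?_) h.le) zero_le)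
    intro ω hω; exact hω.1
  haveI hν : IsProbabilityMeasure (μ[|S₁]) := cond_isProbabilityMeasure hS₁0
  haveI hν' : IsProbabilityMeasure (μ[|S₀]) := cond_isProbabilityMeasure hS₀0
  set T : Ω → (Fin p → ℝ) × (Fin q → ℝ) := fun ω => (Lstar ω, L ω) with hTdef
  have hTm : Measurable T := hLstar.prodMk hL
  set T' : Ω → (Fin p → ℝ) × ((Fin q → ℝ) × ℝ) := fun ω => (Lstar ω, (L ω, Y ω)) with hT'def
  have hT'm : Measurable T' := hLstar.prodMk (hL.prodMk hY)
  set mLL : Ω → ℝ := fun ω => m (Lstar ω) (L ω) with hmLLdef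
  have hmLLm : Measurable mLL := hm.comp hTm
  -- weight functions
  set wreal : (Fin p → ℝ) → ℝ := fun x => (max (η x 0) ε₀)⁻¹ with hwdef
  have hη0m : Measurable (fun x => η x 0) := hη.comp (measurable_id.prodMk measurable_const)
  have hwm : Measurable wreal := (hη0m.max measurable_const).inv
  have hwpos : ∀ x, 0 < wreal x := fun x =>
    inv_pos.2 (lt_of_lt_of_le hε₀ (le_max_right _ _))
  have hwle : ∀ x, wreal x ≤ ε₀⁻¹ := fun x =>
    inv_anti₀ hε₀ (le_max_right _ _)
  set wnn : (Fin p → ℝ) → NNReal := fun x => (wreal x).toNNReal with hwnndef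
  have hwnnm : Measurable wnn := hwm.real_toNNReal
  set dnn : Ω → NNReal := S₁.indicator (fun ω => wnn (Lstar ω)) with hdnndef
  have hdnnm : Measurable dnn := (hwnnm.comp hLstar).indicator hS₁m
  set ρ : Measure Ω := μ.withDensity (fun ω => (dnn ω : ℝ≥0∞)) with hρdef
  -- rectangle identity
  have hrect : ∀ B₁ : Set (Fin p → ℝ), ∀ B₂ : Set ((Fin q → ℝ) × ℝ), MeasurableSet B₁ →
      MeasurableSet B₂ → ρ (T' ⁻¹' (B₁ ×ˢ B₂)) = (μ.restrict S₀) (T' ⁻¹' (B₁ ×ˢ B₂)) := by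
    intro B₁ B₂ hB₁ hB₂
    set V : Set Ω := T' ⁻¹' (B₁ ×ˢ B₂) with hVdef
    have hVm : MeasurableSet V := hT'm (hB₁.prod hB₂)
    set u : Set Ω := {ω | A ω = 0 ∧ Lstar ω ∈ B₁} with hudef
    have hum : MeasurableSet u := by
      have h : u = A ⁻¹' {0} ∩ Lstar ⁻¹' B₁ := by ext ω; simp [hudef]
      rw [h]; exact (hA (measurableSet_singleton 0)).inter (hLstar hB₁)
    have huG : MeasurableSet[MeasurableSpace.comap (fun ω => (Lstar ω, A ω)) inferInstance] u := by
      refine ⟨B₁ ×ˢ {(0 : ℝ)}, hB₁.prod (measurableSet_singleton 0), ?_⟩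
      ext ω
      simp only [Set.mem_preimage, Set.mem_prod, Set.mem_singleton_iff, hudef,
        Set.mem_setOf_eq]
      tauto
    set t : Set Ω := (fun ω => (L ω, Y ω)) ⁻¹' B₂ with htdef
    have htm : MeasurableSet t := (hL.prodMk hY) hB₂
    set s₁ : Set Ω := R ⁻¹' {1} with hs₁def
    set φ : Ω → ℝ := u.indicator (fun ω => wreal (Lstar ω)) with hφdef
    set ξ : Ω → ℝ := (s₁ ∩ t).indicator (fun _ => (1 : ℝ)) with hξdef
    have hξint : Integrable ξ μ := (integrable_const (1 : ℝ)).indicator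
      ((hR (measurableSet_singleton 1)).inter htm)
    have hφbd : ∀ ω, ‖φ ω‖ ≤ ε₀⁻¹ := by
      intro ω
      rw [hφdef]
      by_cases hω : ω ∈ u
      · rw [Set.indicator_of_mem hω, Real.norm_eq_abs, abs_of_pos (hwpos _)]
        exact hwle _
      · rw [Set.indicator_of_notMem hω]; simp [le_of_lt (inv_pos.2 hε₀)]
    have hφm : Measurable φ := (hwm.comp hLstar).indicator hum
    have hφG : StronglyMeasurable[MeasurableSpace.comap (fun ω => (Lstar ω, A ω))
        inferInstance] φ := by
      have hFset : MeasurableSet {z : (Fin p → ℝ) × ℝ | z.2 = 0 ∧ z.1 ∈ B₁} := by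
        have h : {z : (Fin p → ℝ) × ℝ | z.2 = 0 ∧ z.1 ∈ B₁}
            = Prod.snd ⁻¹' {(0 : ℝ)} ∩ Prod.fst ⁻¹' B₁ := by ext z; simp
        rw [h]; exact (measurable_snd (measurableSet_singleton 0)).inter (measurable_fst hB₁)
      have hFm : Measurable ({z : (Fin p → ℝ) × ℝ | z.2 = 0 ∧ z.1 ∈ B₁}.indicator
          (fun z => wreal z.1)) := (hwm.comp measurable_fst).indicator hFset
      have hφeq : φ = ({z : (Fin p → ℝ) × ℝ | z.2 = 0 ∧ z.1 ∈ B₁}.indicator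
          (fun z => wreal z.1)) ∘ (fun ω => (Lstar ω, A ω)) := by
        funext ω
        by_cases hω : A ω = 0 ∧ Lstar ω ∈ B₁
        · rw [hφdef, Set.indicator_of_mem (show ω ∈ u from hω), Function.comp_apply,
            Set.indicator_of_mem (show (Lstar ω, A ω) ∈ _ from hω)]
        · rw [hφdef, Set.indicator_of_notMem (show ω ∉ u from hω), Function.comp_apply,
            Set.indicator_of_notMem (show (Lstar ω, A ω) ∉ _ from hω)]
      rw [hφeq]
      exact (hFm.comp (comap_measurable _)).stronglyMeasurable
    have hXint : Integrable (φ * ξ) μ := hξint.bdd_mul hφm.aestronglyMeasurable (Filter.Eventually.of_forall hφbd)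
    -- conditional independence: product formula
    have hprod := (condIndepFun_iff_condExp_inter_preimage_eq_mul
      (m' := MeasurableSpace.comap (fun ω => (Lstar ω, A ω)) inferInstance)
      (hm' := (hLstar.prodMk hA).comap_le) (μ := μ) hR (hL.prodMk hY)).mp hMAR
      {(1 : ℝ)} B₂ (measurableSet_singleton 1) hB₂
    -- identify the condexp of the indicator of s₁ with η
    have hRind : R = s₁.indicator (fun _ => (1 : ℝ)) := by
      funext ω
      rcases hR01 ω with h | h
      · rw [h, Set.indicator_of_notMem (by simp [hs₁def, h])]
      · rw [h, Set.indicator_of_mem (by simp [hs₁def, h])]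
    have hscond : (fun ω => η (Lstar ω) (A ω)) =ᵐ[μ]
        μ[s₁.indicator (fun _ => (1 : ℝ))|MeasurableSpace.comap (fun ω => (Lstar ω, A ω))
          inferInstance] := by rw [← hRind]; exact hηver
    -- compute the integral of φ * ξ
    have hint1 : ∫ ω, (φ * ξ) ω ∂μ = ∫ ω in u, t.indicator (fun _ => (1 : ℝ)) ω ∂μ := by
      rw [← integral_condExp (f := φ * ξ) hG]
      have hce : μ[φ * ξ|MeasurableSpace.comap (fun ω => (Lstar ω, A ω)) inferInstance]
          =ᵐ[μ] φ * μ[ξ|MeasurableSpace.comap (fun ω => (Lstar ω, A ω)) inferInstance] :=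
        condExp_mul_of_stronglyMeasurable_left hφG hXint hξint
      rw [integral_congr_ae hce]
      have hchain : (φ * μ[ξ|MeasurableSpace.comap (fun ω => (Lstar ω, A ω)) inferInstance])
          =ᵐ[μ] u.indicator (fun ω =>
            (μ[t.indicator (fun _ => (1 : ℝ))|MeasurableSpace.comap (fun ω => (Lstar ω, A ω))
              inferInstance]) ω) := by
        filter_upwards [hprod, hscond, hηpos] with ω hprodω hscondω hposω
        have hξs : ξ = (R ⁻¹' {(1 : ℝ)} ∩ (fun ω => (L ω, Y ω)) ⁻¹' B₂).indicator
            (fun _ => (1 : ℝ)) := rfl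
        rw [Pi.mul_apply, hξs, hprodω, ← hscondω]
        by_cases hω : ω ∈ u
        · rw [Set.indicator_of_mem hω, hφdef, Set.indicator_of_mem hω]
          have hA0 : A ω = 0 := hω.1
          rw [hA0]
          have hmax : max (η (Lstar ω) 0) ε₀ = η (Lstar ω) 0 := max_eq_left hposω.1
          rw [hwdef]
          simp only
          rw [hmax, ← mul_assoc, inv_mul_cancel₀ (by linarith [hposω.1] : η (Lstar ω) 0 ≠ 0),
            one_mul]
        · rw [Set.indicator_of_notMem hω, hφdef, Set.indicator_of_notMem hω, zero_mul]
      rw [integral_congr_ae hchain, integral_indicator hum]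
      exact setIntegral_condExp hG ((integrable_const (1 : ℝ)).indicator htm) huG
    have hint2 : ∫ ω in u, t.indicator (fun _ => (1 : ℝ)) ω ∂μ = (μ (t ∩ u)).toReal := by
      rw [show (t.indicator (fun _ => (1 : ℝ))) = t.indicator 1 from rfl,
        integral_indicator_one htm, measureReal_def, Measure.restrict_apply htm]
    -- left side
    have hXnn : 0 ≤ᵐ[μ] (φ * ξ) := by
      refine Filter.Eventually.of_forall fun ω => ?_
      rw [Pi.mul_apply]
      refine mul_nonneg (Set.indicator_nonneg (fun x _ => (hwpos _).le) ω)
        (Set.indicator_nonneg (fun x _ => zero_le_one) ω)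
    have hLHS : ρ V = ENNReal.ofReal (∫ ω, (φ * ξ) ω ∂μ) := by
      rw [ofReal_integral_eq_lintegral_ofReal hXint hXnn]
      rw [hρdef, withDensity_apply _ hVm, ← lintegral_indicator hVm]
      refine lintegral_congr fun ω => ?_
      by_cases h1 : A ω = 0 <;> by_cases h2 : R ω = 1 <;> by_cases h3 : Lstar ω ∈ B₁ <;>
        by_cases h4 : (L ω, Y ω) ∈ B₂ <;>
        simp only [Pi.mul_apply, hφdef, hξdef, hdnndef, hVdef, hudef, hs₁def, htdef, hS₁def,
          Set.indicator, Set.mem_setOf_eq, Set.mem_inter_iff, Set.mem_preimage,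
          Set.mem_singleton_iff, Set.mem_prod, h1, h2, h3, h4, if_true, if_false, true_and,
          false_and, and_true, and_false, mul_one, mul_zero, zero_mul, one_mul,
          ENNReal.ofReal_zero, ENNReal.ofReal_one, not_true, not_false_iff, hT'def, ENNReal.coe_zero] <;>
        try rfl
    -- right side
    have htu : t ∩ u = V ∩ S₀ := by
      ext ω
      simp only [htdef, hudef, hVdef, hS₀def, Set.mem_inter_iff, Set.mem_preimage,
        Set.mem_setOf_eq, Set.mem_prod]
      tauto
    rw [hLHS, hint1, hint2, htu, Measure.restrict_apply hVm,
      ENNReal.ofReal_toReal (measure_ne_top μ _)]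
  -- finiteness of ρ
  haveI hρfin : IsFiniteMeasure ρ := by
    constructor
    rw [hρdef, withDensity_apply _ MeasurableSet.univ, Measure.restrict_univ]
    calc ∫⁻ ω, (dnn ω : ℝ≥0∞) ∂μ ≤ ∫⁻ _, ENNReal.ofReal ε₀⁻¹ ∂μ := by
          refine lintegral_mono fun ω => ?_
          rw [hdnndef]
          by_cases hω : ω ∈ S₁
          · rw [Set.indicator_of_mem hω]
            rw [hwnndef, ENNReal.ofReal, ENNReal.coe_le_coe]
            exact Real.toNNReal_mono (hwle _)
          · rw [Set.indicator_of_notMem hω]; simp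
      _ < ∞ := by
          rw [lintegral_const]
          exact ENNReal.mul_lt_top ENNReal.ofReal_lt_top (measure_lt_top μ _)
  -- map equality
  have hmap : Measure.map T' ρ = Measure.map T' (μ.restrict S₀) := by
    refine ext_of_generate_finite _ generateFrom_prod.symm isPiSystem_prod ?_ ?_
    · rintro s ⟨B₁, hB₁, B₂, hB₂, rfl⟩
      have hB₁m : MeasurableSet B₁ := hB₁
      have hB₂m : MeasurableSet B₂ := hB₂
      rw [Measure.map_apply hT'm (hB₁m.prod hB₂m), Measure.map_apply hT'm (hB₁m.prod hB₂m)]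
      exact hrect B₁ B₂ hB₁m hB₂m
    · rw [Measure.map_apply hT'm MeasurableSet.univ, Measure.map_apply hT'm MeasurableSet.univ,
        ← Set.univ_prod_univ]
      exact hrect _ _ MeasurableSet.univ MeasurableSet.univ
  -- transfer of integrals
  have htrans : ∀ f : (Fin p → ℝ) × ((Fin q → ℝ) × ℝ) → ℝ, Measurable f →
      ∫ ω, f (T' ω) ∂(μ.restrict S₀) = ∫ ω, f (T' ω) ∂ρ := by
    intro f hf
    rw [← integral_map hT'm.aemeasurable hf.aestronglyMeasurable,
      ← integral_map hT'm.aemeasurable hf.aestronglyMeasurable, hmap]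
  have hltrans : ∀ f : (Fin p → ℝ) × ((Fin q → ℝ) × ℝ) → ℝ≥0∞, Measurable f →
      ∫⁻ ω, f (T' ω) ∂(μ.restrict S₀) = ∫⁻ ω, f (T' ω) ∂ρ := by
    intro f hf
    rw [← lintegral_map hf hT'm, ← lintegral_map hf hT'm, hmap]
  -- integral over ρ as weighted integral over restrict S₁
  have hρint : ∀ h : Ω → ℝ, ∫ ω, h ω ∂ρ = ∫ ω in S₁, wreal (Lstar ω) * h ω ∂μ := by
    intro h
    rw [hρdef, integral_withDensity_eq_integral_smul hdnnm]
    rw [← integral_indicator hS₁m]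
    congr 1
    funext ω
    by_cases hω : ω ∈ S₁
    · simp only [hdnndef, Set.indicator_of_mem hω, NNReal.smul_def, smul_eq_mul]
      congr 1
      exact Real.coe_toNNReal _ (hwpos (Lstar ω)).le
    · simp [hdnndef, Set.indicator_of_notMem hω]
  -- integrability of Y and mLL under the conditional measures
  have hYint : Integrable Y μ := hY2.integrable (by norm_num)
  have hYint1 : Integrable Y (μ[|S₁]) := by
    rw [ProbabilityTheory.cond]
    exact (integrable_smul_measure (ENNReal.inv_ne_zero.2 (measure_ne_top μ S₁))
      (ENNReal.inv_ne_top.2 hS₁0)).2 hYint.restrict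
  have hYint0 : Integrable Y (μ[|S₀]) := by
    rw [ProbabilityTheory.cond]
    exact (integrable_smul_measure (ENNReal.inv_ne_zero.2 (measure_ne_top μ S₀))
      (ENNReal.inv_ne_top.2 hS₀0)).2 hYint.restrict
  have hmLLint1 : Integrable mLL (μ[|S₁]) := integrable_condExp.congr hmver.symm
  have hrestr1 : μ.restrict S₁ = (μ S₁) • (μ[|S₁]) := by
    rw [ProbabilityTheory.cond, smul_smul, ENNReal.mul_inv_cancel hS₁0 (measure_ne_top μ S₁),
      one_smul]
  -- the weighted identity under μ[|S₁]
  have hweight : ∀ W : Ω → ℝ,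
      StronglyMeasurable[MeasurableSpace.comap (fun ω => (Lstar ω, L ω)) inferInstance] W →
      (∃ C, ∀ ω, ‖W ω‖ ≤ C) →
      ∫ ω, W ω * mLL ω ∂(μ[|S₁]) = ∫ ω, W ω * Y ω ∂(μ[|S₁]) := by
    intro W hWm hWb
    have hWY : Integrable (fun ω => W ω * Y ω) (μ[|S₁]) :=
      hYint1.bdd_mul ((hWm.mono hG0).aestronglyMeasurable) (Filter.Eventually.of_forall hWb.choose_spec)
    have h1 : ∫ ω, W ω * mLL ω ∂(μ[|S₁]) = ∫ ω, W ω *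
        ((μ[|S₁])[Y|MeasurableSpace.comap (fun ω => (Lstar ω, L ω)) inferInstance]) ω
        ∂(μ[|S₁]) := by
      refine integral_congr_ae ?_
      filter_upwards [hmver] with ω hω
      show W ω * mLL ω = _
      rw [hω]
    rw [h1]
    have h2 : (fun ω => W ω *
        ((μ[|S₁])[Y|MeasurableSpace.comap (fun ω => (Lstar ω, L ω)) inferInstance]) ω)
        =ᵐ[μ[|S₁]] (μ[|S₁])[fun ω => W ω * Y ω|
          MeasurableSpace.comap (fun ω => (Lstar ω, L ω)) inferInstance] := by
      have h3 := condExp_mul_of_stronglyMeasurable_left (μ := μ[|S₁]) hWm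
        (show Integrable (W * Y) (μ[|S₁]) from hWY) hYint1
      exact (h3.symm : _)
    rw [integral_congr_ae h2, integral_condExp hG0]
  -- main set-integral identity under μ.restrict S₀
  have hkey : ∀ B : Set ((Fin p → ℝ) × (Fin q → ℝ)), MeasurableSet B →
      ∫ ω in T ⁻¹' B, mLL ω ∂(μ.restrict S₀) = ∫ ω in T ⁻¹' B, Y ω ∂(μ.restrict S₀) := by
    intro B hB
    have hBm : MeasurableSet (T ⁻¹' B) := hTm hB
    rw [← integral_indicator hBm, ← integral_indicator hBm]
    have hproj : Measurable (fun z : (Fin p → ℝ) × ((Fin q → ℝ) × ℝ) => (z.1, z.2.1)) :=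
      measurable_fst.prodMk (measurable_fst.comp measurable_snd)
    set E2 : Set ((Fin p → ℝ) × ((Fin q → ℝ) × ℝ)) :=
      (fun z : (Fin p → ℝ) × ((Fin q → ℝ) × ℝ) => (z.1, z.2.1)) ⁻¹' B with hE2def
    have hE2m : MeasurableSet E2 := hproj hB
    set F : (Fin p → ℝ) × ((Fin q → ℝ) × ℝ) → ℝ :=
      E2.indicator (fun z => m z.1 z.2.1) with hFdef
    set K : (Fin p → ℝ) × ((Fin q → ℝ) × ℝ) → ℝ := E2.indicator (fun z => z.2.2) with hKdef
    have hFm : Measurable F := (hm.comp hproj).indicator hE2m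
    have hKm : Measurable K := (measurable_snd.comp measurable_snd).indicator hE2m
    have hFT : ∀ ω, F (T' ω) = (T ⁻¹' B).indicator mLL ω := by
      intro ω
      by_cases hω : (Lstar ω, L ω) ∈ B
      · rw [hFdef, Set.indicator_of_mem (show T' ω ∈ E2 from hω),
          Set.indicator_of_mem (show ω ∈ T ⁻¹' B from hω)]
      · rw [hFdef, Set.indicator_of_notMem (show T' ω ∉ E2 from hω),
          Set.indicator_of_notMem (show ω ∉ T ⁻¹' B from hω)]
    have hKT : ∀ ω, K (T' ω) = (T ⁻¹' B).indicator Y ω := by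
      intro ω
      by_cases hω : (Lstar ω, L ω) ∈ B
      · rw [hKdef, Set.indicator_of_mem (show T' ω ∈ E2 from hω),
          Set.indicator_of_mem (show ω ∈ T ⁻¹' B from hω)]
      · rw [hKdef, Set.indicator_of_notMem (show T' ω ∉ E2 from hω),
          Set.indicator_of_notMem (show ω ∉ T ⁻¹' B from hω)]
    set W : Ω → ℝ := fun ω => wreal (Lstar ω) * (T ⁻¹' B).indicator (fun _ => (1 : ℝ)) ω
      with hWdef
    have hWG : StronglyMeasurable[MeasurableSpace.comap (fun ω => (Lstar ω, L ω))
        inferInstance] W := by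
      have hWeq : W = (fun z : (Fin p → ℝ) × (Fin q → ℝ) =>
          wreal z.1 * B.indicator (fun _ => (1 : ℝ)) z) ∘ T := by
        funext ω
        rw [hWdef]
        simp only [Function.comp_apply]
        by_cases hω : (Lstar ω, L ω) ∈ B
        · rw [Set.indicator_of_mem (show ω ∈ T ⁻¹' B from hω),
            Set.indicator_of_mem (show T ω ∈ B from hω)]
        · rw [Set.indicator_of_notMem (show ω ∉ T ⁻¹' B from hω),
            Set.indicator_of_notMem (show T ω ∉ B from hω)]
      rw [hWeq]
      exact (((hwm.comp measurable_fst).mul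
        (measurable_const.indicator hB)).comp (comap_measurable T)).stronglyMeasurable
    have hWbd : ∃ C, ∀ ω, ‖W ω‖ ≤ C := by
      refine ⟨ε₀⁻¹, fun ω => ?_⟩
      rw [hWdef]
      simp only
      by_cases hω : ω ∈ T ⁻¹' B
      · rw [Set.indicator_of_mem hω, mul_one, Real.norm_eq_abs, abs_of_pos (hwpos _)]
        exact hwle _
      · rw [Set.indicator_of_notMem hω, mul_zero, norm_zero]
        exact (inv_pos.2 hε₀).le
    have hWm : ∀ ω, wreal (Lstar ω) * F (T' ω) = W ω * mLL ω := by
      intro ω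
      rw [hFT ω]
      simp only [hWdef]
      by_cases hω : ω ∈ T ⁻¹' B
      · rw [Set.indicator_of_mem hω, Set.indicator_of_mem hω, mul_one]
      · rw [Set.indicator_of_notMem hω, Set.indicator_of_notMem hω]
        ring
    have hWY : ∀ ω, wreal (Lstar ω) * K (T' ω) = W ω * Y ω := by
      intro ω
      rw [hKT ω]
      simp only [hWdef]
      by_cases hω : ω ∈ T ⁻¹' B
      · rw [Set.indicator_of_mem hω, Set.indicator_of_mem hω, mul_one]
      · rw [Set.indicator_of_notMem hω, Set.indicator_of_notMem hω]
        ring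
    calc ∫ ω, (T ⁻¹' B).indicator mLL ω ∂(μ.restrict S₀)
        = ∫ ω, F (T' ω) ∂(μ.restrict S₀) := by
          refine integral_congr_ae (Filter.Eventually.of_forall fun ω => ?_)
          exact (hFT ω).symm
      _ = ∫ ω, F (T' ω) ∂ρ := htrans F hFm
      _ = ∫ ω in S₁, wreal (Lstar ω) * F (T' ω) ∂μ := hρint _
      _ = (μ S₁).toReal • ∫ ω, wreal (Lstar ω) * F (T' ω) ∂(μ[|S₁]) := by
          rw [hrestr1, integral_smul_measure]
      _ = (μ S₁).toReal • ∫ ω, W ω * mLL ω ∂(μ[|S₁]) := by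
          congr 1
          exact integral_congr_ae (Filter.Eventually.of_forall fun ω => hWm ω)
      _ = (μ S₁).toReal • ∫ ω, W ω * Y ω ∂(μ[|S₁]) := by rw [hweight W hWG hWbd]
      _ = (μ S₁).toReal • ∫ ω, wreal (Lstar ω) * K (T' ω) ∂(μ[|S₁]) := by
          congr 1
          exact integral_congr_ae (Filter.Eventually.of_forall fun ω => (hWY ω).symm)
      _ = ∫ ω in S₁, wreal (Lstar ω) * K (T' ω) ∂μ := by
          rw [hrestr1, integral_smul_measure]
      _ = ∫ ω, K (T' ω) ∂ρ := (hρint _).symm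
      _ = ∫ ω, K (T' ω) ∂(μ.restrict S₀) := (htrans K hKm).symm
      _ = ∫ ω, (T ⁻¹' B).indicator Y ω ∂(μ.restrict S₀) := by
          refine integral_congr_ae (Filter.Eventually.of_forall fun ω => ?_)
          exact hKT ω
  -- integrability of mLL under μ[|S₀]
  have hmLLint0 : Integrable mLL (μ[|S₀]) := by
    have hproj : Measurable (fun z : (Fin p → ℝ) × ((Fin q → ℝ) × ℝ) => (z.1, z.2.1)) :=
      measurable_fst.prodMk (measurable_fst.comp measurable_snd)
    have hHm : Measurable (fun z : (Fin p → ℝ) × ((Fin q → ℝ) × ℝ) =>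
        (‖m z.1 z.2.1‖₊ : ℝ≥0∞)) := ((hm.comp hproj).nnnorm).coe_nnreal_ennreal
    have hfin : ∫⁻ ω, (‖mLL ω‖₊ : ℝ≥0∞) ∂(μ.restrict S₀) < ∞ := by
      have h1 : (fun ω => (‖mLL ω‖₊ : ℝ≥0∞)) = fun ω =>
          (fun z : (Fin p → ℝ) × ((Fin q → ℝ) × ℝ) => (‖m z.1 z.2.1‖₊ : ℝ≥0∞)) (T' ω) := rfl
      have h2 := lintegral_withDensity_eq_lintegral_mul μ
        (f := fun ω => ((dnn ω : NNReal) : ℝ≥0∞)) hdnnm.coe_nnreal_ennreal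
        (g := fun ω => (‖mLL ω‖₊ : ℝ≥0∞)) hmLLm.nnnorm.coe_nnreal_ennreal
      rw [h1, hltrans _ hHm, ← h1, hρdef, h2]
      calc ∫⁻ ω, ((fun ω => ((dnn ω : NNReal) : ℝ≥0∞)) * fun ω => (‖mLL ω‖₊ : ℝ≥0∞)) ω ∂μ
          ≤ ∫⁻ ω, S₁.indicator (fun ω => ENNReal.ofReal ε₀⁻¹ * (‖mLL ω‖₊ : ℝ≥0∞)) ω ∂μ := by
            refine lintegral_mono fun ω => ?_
            rw [Pi.mul_apply]
            by_cases hω : ω ∈ S₁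
            · rw [Set.indicator_of_mem hω, hdnndef, Set.indicator_of_mem hω]
              refine mul_le_mul_left ?_ _
              rw [hwnndef, ENNReal.ofReal, ENNReal.coe_le_coe]
              exact Real.toNNReal_mono (hwle _)
            · rw [hdnndef, Set.indicator_of_notMem hω, Set.indicator_of_notMem hω]
              simp
        _ = ENNReal.ofReal ε₀⁻¹ * ∫⁻ ω in S₁, (‖mLL ω‖₊ : ℝ≥0∞) ∂μ := by
            rw [lintegral_indicator hS₁m, lintegral_const_mul _ hmLLm.nnnorm.coe_nnreal_ennreal]
        _ < ∞ := by
            refine ENNReal.mul_lt_top ENNReal.ofReal_lt_top ?_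
            rw [hrestr1, lintegral_smul_measure]
            exact ENNReal.mul_lt_top (measure_lt_top μ S₁) hmLLint1.2
    refine ⟨hmLLm.aestronglyMeasurable, ?_⟩
    show ∫⁻ ω, (‖mLL ω‖₊ : ℝ≥0∞) ∂(μ[|S₀]) < ∞
    rw [ProbabilityTheory.cond, lintegral_smul_measure]
    exact ENNReal.mul_lt_top (ENNReal.inv_lt_top.2 (pos_iff_ne_zero.2 hS₀0)) hfin
  -- conclude
  refine ae_eq_condExp_of_forall_setIntegral_eq hG0 hYint0 (fun s hs _ => hmLLint0.integrableOn)
    (fun s hs _ => ?_) ?_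
  · obtain ⟨B, hB, rfl⟩ := hs
    have hsm : MeasurableSet (T ⁻¹' B) := hTm hB
    simp only [ProbabilityTheory.cond, Measure.restrict_smul, integral_smul_measure]
    congr 1
    exact hkey B hB
  · exact StronglyMeasurable.aestronglyMeasurable
      ((hm.comp (comap_measurable T)).stronglyMeasurable : _)
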